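/- arXiv:2010.08083 — 2 statements merged into one kernel-verified Lean document; each statement's English description precedes it below -/
import Mathlib

section
/- Let H be a simple graph with LICL(H) ≥ 6, i.e., H contains an induced cycle of length at least 6. Then dtw(H) ≥ 2; that is, there exists an acyclic orientation H→ of H such that every DAG tree decomposition of H→ has width at least 2. -/
/-- An acyclic orientation of a simple graph `H`: a relation `D` directing every
edge of `H` (and nothing else) with no directed cycle. -/
structure GraphOrientation {V : Type} (H : SimpleGraph V) : Type where
  D : V → V → Prop
  adj_of_rel : ∀ u v, D u v → H.Adj u v
  rel_of_adj : ∀ u v, H.Adj u v → D u v ∨ D v u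
  acyclic : ∀ v, ¬ Relation.TransGen D v v

namespace GraphOrientation

variable {V : Type} {H : SimpleGraph V}

/-- The set of sources of an acyclic orientation: vertices with no incoming edge. -/
def sources (O : GraphOrientation H) : Set V := {s | ∀ u, ¬ O.D u s}

/-- The set of vertices reachable from `s` by a directed path (including `s`). -/
def reach (O : GraphOrientation H) (s : V) : Set V := {v | Relation.ReflTransGen O.D s v}

/-- The set of vertices reachable from some vertex of `B`. -/
def reachSet (O : GraphOrientation H) (B : Set V) : Set V := ⋃ s ∈ B, O.reach s

end GraphOrientation

/-- `tree` together with the bag assignment `bag` is a (partial) DAG tree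
decomposition of the orientation `O` with respect to the vertex set `Sp`:
a finite tree whose bags are subsets of `Sp` whose union is `Sp`, such that
whenever a node `j` lies on the (unique) path between nodes `i` and `k`,
`reach(bag i) ∩ reach(bag k) ⊆ reach(bag j)`.
Taking `Sp = O.sources` gives the notion of a DAG tree decomposition of `O`. -/
def IsPDTD {V : Type} {H : SimpleGraph V} (O : GraphOrientation H) (Sp : Set V)
    {ι : Type} (tree : SimpleGraph ι) (bag : ι → Set V) : Prop :=
  Finite ι ∧ tree.IsTree ∧ (∀ i, bag i ⊆ Sp) ∧ (⋃ i, bag i) = Sp ∧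
    ∀ (i j k : ι) (p : tree.Walk i k), p.IsPath → j ∈ p.support →
      O.reachSet (bag i) ∩ O.reachSet (bag k) ⊆ O.reachSet (bag j)

/-- The width of a bag assignment: the maximum bag size. -/
noncomputable def bagWidth {V ι : Type} (bag : ι → Set V) : ℕ := ⨆ i, (bag i).ncard

/-- A width-one (partial) DAG tree decomposition: every bag is a singleton, and
distinct nodes carry distinct bags (so nodes may be identified with sources). -/
def IsWidthOnePDTD {V : Type} {H : SimpleGraph V} (O : GraphOrientation H) (Sp : Set V)
    {ι : Type} (tree : SimpleGraph ι) (bag : ι → Set V) : Prop :=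
  IsPDTD O Sp tree bag ∧ Function.Injective bag ∧ ∀ i, ∃ s : V, bag i = {s}

/-- `H` contains an induced cycle of length `n`. -/
def HasInducedCycleOfLength {V : Type} (H : SimpleGraph V) (n : ℕ) : Prop :=
  Nonempty (SimpleGraph.cycleGraph n ↪g H)

/-- The unique reachability graph of an orientation `O` over a set `Sp` of sources:
`s₁` and `s₂` are adjacent iff some vertex is reachable from both `s₁` and `s₂`
but from no other member of `Sp`. -/
def URGraph {V : Type} {H : SimpleGraph V} (O : GraphOrientation H) (Sp : Set V) :
    SimpleGraph V where
  Adj s₁ s₂ := s₁ ∈ Sp ∧ s₂ ∈ Sp ∧ s₁ ≠ s₂ ∧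
    ((O.reach s₁ ∩ O.reach s₂) \ O.reachSet (Sp \ {s₁, s₂})).Nonempty
  symm := by
    refine ⟨?_⟩
    rintro a b ⟨ha, hb, hab, hx⟩
    refine ⟨hb, ha, hab.symm, ?_⟩
    rwa [Set.inter_comm (O.reach b) (O.reach a), Set.pair_comm b a]
  loopless := by
    refine ⟨?_⟩
    rintro a ⟨-, -, h, -⟩
    exact h rfl

/-- `(x, (tree, bag))` is a good pair: some leaf `ℓ` of the width-one decomposition,
with unique neighbour `d`, satisfies `reach x ∩ reach ℓ ⊆ reach d`. -/
def GoodPair {V : Type} {H : SimpleGraph V} (O : GraphOrientation H)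
    {ι : Type} (tree : SimpleGraph ι) (bag : ι → Set V) (x : V) : Prop :=
  ∃ (i j : ι) (l d : V), tree.neighborSet i = {j} ∧ bag i = {l} ∧ bag j = {d} ∧
    O.reach x ∩ O.reach l ⊆ O.reach d

open SimpleGraph

section AuxMedian

lemma exists_first_mem {V : Type} {G : SimpleGraph V} {a b : V} (p : G.Walk a b)
    (S : V → Prop) (hb : S b) :
    ∃ m, S m ∧ ∃ (p1 : G.Walk a m) (p2 : G.Walk m b), p = p1.append p2 ∧
      ∀ x ∈ p1.support, S x → x = m := by
  induction p with
  | nil =>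
    refine ⟨_, hb, .nil, .nil, rfl, ?_⟩
    intro x hx _
    simpa using hx
  | @cons u v w h q ih =>
    by_cases hu : S u
    · refine ⟨u, hu, .nil, .cons h q, rfl, ?_⟩
      intro x hx _
      simpa using hx
    · obtain ⟨m, hm, p1, p2, hp, hmin⟩ := ih hb
      refine ⟨m, hm, .cons h p1, p2, by rw [hp]; rfl, ?_⟩
      intro x hx hSx
      rcases (by simpa using hx : x = u ∨ x ∈ p1.support) with h1 | h2
      · exact absurd (h1 ▸ hSx) hu
      · exact hmin x h2 hSx

lemma tree_median {ι : Type} {T : SimpleGraph ι} (hT : T.IsTree) (a b c : ι) :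
    ∃ (m : ι) (pab : T.Walk a b) (pbc : T.Walk b c) (pac : T.Walk a c),
      pab.IsPath ∧ pbc.IsPath ∧ pac.IsPath ∧
      m ∈ pab.support ∧ m ∈ pbc.support ∧ m ∈ pac.support := by
  classical
  obtain ⟨p, hp, -⟩ := hT.existsUnique_path a b
  obtain ⟨q, hq, -⟩ := hT.existsUnique_path b c
  obtain ⟨m, hm, p1, p2, hsplit, hmin⟩ := exists_first_mem p (· ∈ q.support) q.start_mem_support
  have hp1 : p1.IsPath := by
    have := hsplit ▸ hp
    exact this.of_append_left
  have hq2 : (q.dropUntil m hm).IsPath := hq.dropUntil hm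
  have hmnotail : m ∉ (q.dropUntil m hm).support.tail := by
    have := hq2.support_nodup
    rw [Walk.support_eq_cons] at this
    exact (List.nodup_cons.mp this).1
  have hw : (p1.append (q.dropUntil m hm)).IsPath := by
    rw [Walk.isPath_def, Walk.support_append]
    refine List.Nodup.append hp1.support_nodup ?_ ?_
    · exact hq2.support_nodup.tail
    · intro x hx1 hx2
      have hxq : x ∈ q.support := Walk.support_dropUntil_subset _ hm (List.tail_subset _ hx2)
      have := hmin x hx1 hxq
      subst this
      exact hmnotail hx2
  refine ⟨m, p, q, p1.append (q.dropUntil m hm), hp, hq, hw, ?_, hm, ?_⟩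
  · rw [hsplit]
    exact Walk.subset_support_append_left _ _ p1.end_mem_support
  · exact Walk.subset_support_append_left _ _ p1.end_mem_support

end AuxMedian

open SimpleGraph

/-- Rank of a cycle index: indices 0,2,4 get ranks 0,1,2 (sources); 1,3 get 3,4 (sinks);
indices ≥ 5 keep their own value, forming an increasing chain `4 → 5 → ⋯ → n-1`. -/
def crank (k : ℕ) : ℕ :=
  if k = 0 then 0 else if k = 2 then 1 else if k = 4 then 2 else
  if k = 1 then 3 else if k = 3 then 4 else k

lemma crank_lt {n k : ℕ} (hn : 6 ≤ n) (hk : k < n) : crank k < n := by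
  unfold crank; split_ifs <;> omega

lemma crank_inj {a b : ℕ} (h : crank a = crank b) : a = b := by
  unfold crank at h; split_ifs at h <;> omega

lemma crank_of_ge {k : ℕ} (h : 5 ≤ k) : crank k = k := by
  unfold crank; split_ifs <;> omega

lemma fin_sub_val_one {n : ℕ} (hn : 6 ≤ n) {i j : Fin n} :
    (j - i).val = 1 ↔ (j.val = i.val + 1 ∨ (i.val = n - 1 ∧ j.val = 0)) := by
  rw [Fin.sub_def]
  simp only
  have hi := i.isLt
  have hj := j.isLt
  rcases lt_or_ge (n - i.val + j.val) n with h | h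
  · rw [Nat.mod_eq_of_lt h]; omega
  · rw [Nat.mod_eq_sub_mod h, Nat.mod_eq_of_lt (by omega)]; omega

lemma cyc_adj {n : ℕ} (hn : 6 ≤ n) {i j : Fin n} :
    (cycleGraph n).Adj i j ↔ (j.val = i.val + 1 ∨ i.val = j.val + 1 ∨
      (i.val = 0 ∧ j.val = n - 1) ∨ (i.val = n - 1 ∧ j.val = 0)) := by
  rw [cycleGraph_adj', fin_sub_val_one hn, fin_sub_val_one hn]
  omega

section Orientation

variable {V : Type} [Fintype V] {H : SimpleGraph V} {n : ℕ}

open Classical in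
/-- The rank of a vertex: cycle vertices get their `crank`, others get big values. -/
noncomputable def vrank (e : cycleGraph n ↪g H) (x : V) : ℕ :=
  if h : ∃ i : Fin n, e i = x then crank (Classical.choose h).val
  else n + (Fintype.equivFin V x).val

lemma vrank_e (e : cycleGraph n ↪g H) (i : Fin n) : vrank e (e i) = crank i.val := by
  have h : ∃ j : Fin n, e j = e i := ⟨i, rfl⟩
  rw [vrank, dif_pos h, e.injective (Classical.choose_spec h)]

lemma exists_of_vrank_lt (e : cycleGraph n ↪g H) {x : V} (hx : vrank e x < n) :
    ∃ i : Fin n, e i = x := by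
  by_contra h
  rw [vrank, dif_neg h] at hx
  omega

lemma vrank_inj (hn : 6 ≤ n) (e : cycleGraph n ↪g H) : Function.Injective (vrank e) := by
  intro x y hxy
  by_cases hx : ∃ i : Fin n, e i = x <;> by_cases hy : ∃ i : Fin n, e i = y
  · obtain ⟨i, rfl⟩ := hx; obtain ⟨j, rfl⟩ := hy
    rw [vrank_e, vrank_e] at hxy
    exact congrArg e (Fin.ext (crank_inj hxy))
  · exfalso
    obtain ⟨i, rfl⟩ := hx
    rw [vrank_e] at hxy
    have := crank_lt hn i.isLt
    rw [vrank, dif_neg hy] at hxy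
    omega
  · exfalso
    obtain ⟨j, rfl⟩ := hy
    rw [vrank_e] at hxy
    have := crank_lt hn j.isLt
    rw [vrank, dif_neg hx] at hxy
    omega
  · rw [vrank, vrank, dif_neg hx, dif_neg hy] at hxy
    exact (Fintype.equivFin V).injective (Fin.ext (by omega))

/-- The orientation of `H` induced by `vrank`: edges point from lower to higher rank. -/
noncomputable def cOr (hn : 6 ≤ n) (e : cycleGraph n ↪g H) : GraphOrientation H where
  D u v := H.Adj u v ∧ vrank e u < vrank e v
  adj_of_rel u v h := h.1
  rel_of_adj u v h := by
    rcases lt_or_gt_of_ne (fun heq => h.ne (vrank_inj hn e heq)) with h' | h'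
    · exact Or.inl ⟨h, h'⟩
    · exact Or.inr ⟨h.symm, h'⟩
  acyclic v hv := by
    have key : ∀ a b : V, Relation.TransGen (fun u v => H.Adj u v ∧ vrank e u < vrank e v) a b →
        vrank e a < vrank e b := by
      intro a b h
      induction h with
      | single h => exact h.2
      | tail _ h ih => exact lt_trans ih h.2
    exact lt_irrefl _ (key v v hv)

variable (hn : 6 ≤ n) (e : cycleGraph n ↪g H)

lemma D_into {u : V} {j : Fin n} (h : (cOr hn e).D u (e j)) :
    ∃ i : Fin n, u = e i ∧ crank i.val < crank j.val ∧
      (j.val = i.val + 1 ∨ i.val = j.val + 1 ∨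
        (i.val = 0 ∧ j.val = n - 1) ∨ (i.val = n - 1 ∧ j.val = 0)) := by
  obtain ⟨hadj, hlt⟩ := h
  rw [vrank_e] at hlt
  obtain ⟨i, rfl⟩ := exists_of_vrank_lt e (lt_trans hlt (crank_lt hn j.isLt))
  rw [vrank_e] at hlt
  exact ⟨i, rfl, hlt, (cyc_adj hn).mp (e.map_adj_iff.mp hadj)⟩

lemma D_e {i j : Fin n}
    (hadj : j.val = i.val + 1 ∨ i.val = j.val + 1 ∨
        (i.val = 0 ∧ j.val = n - 1) ∨ (i.val = n - 1 ∧ j.val = 0))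
    (hlt : crank i.val < crank j.val) : (cOr hn e).D (e i) (e j) := by
  refine ⟨e.map_adj_iff.mpr ((cyc_adj hn).mpr hadj), ?_⟩
  rw [vrank_e, vrank_e]; exact hlt

lemma D_step (a b : ℕ) (han : a < n) (hbn : b < n)
    (hadj : b = a + 1 ∨ a = b + 1 ∨ (a = 0 ∧ b = n - 1) ∨ (a = n - 1 ∧ b = 0))
    (hlt : crank a < crank b) : (cOr hn e).D (e ⟨a, han⟩) (e ⟨b, hbn⟩) :=
  D_e hn e (by simpa using hadj) (by simpa using hlt)

lemma source_spec {k : ℕ} (hkn : k < n) (hk : k = 0 ∨ k = 2 ∨ k = 4) :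
    e ⟨k, hkn⟩ ∈ (cOr hn e).sources := by
  intro u hu
  obtain ⟨i, rfl, hlt, hadj⟩ := D_into hn e hu
  simp only [Fin.val_mk] at hadj hlt
  have hi := i.isLt
  unfold crank at hlt
  split_ifs at hlt <;> omega

lemma reach_source_eq {s t : V} (ht : t ∈ (cOr hn e).sources)
    (h : Relation.ReflTransGen (cOr hn e).D s t) : s = t := by
  rcases h.cases_tail with h | ⟨c, _, hc⟩
  · exact h.symm
  · exact absurd hc (ht c)

lemma reach_t1 {s : V} (hs : s ∈ (cOr hn e).sources)
    (h : e ⟨1, by omega⟩ ∈ (cOr hn e).reach s) :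
    s = e ⟨0, by omega⟩ ∨ s = e ⟨2, by omega⟩ := by
  rcases h.cases_tail with h | ⟨c, hsc, hc⟩
  · exfalso
    refine hs (e ⟨0, by omega⟩) ?_
    rw [← h]
    exact D_step hn e 0 1 (by omega) (by omega) (by omega) (by decide)
  · obtain ⟨i, rfl, hlt, hadj⟩ := D_into hn e hc
    simp only [Fin.val_mk] at hadj hlt
    have hi := i.isLt
    have h02 : i.val = 0 ∨ i.val = 2 := by omega
    rcases h02 with h0 | h2
    · have hieq : i = ⟨0, by omega⟩ := Fin.ext h0
      rw [hieq] at hsc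
      exact Or.inl (reach_source_eq hn e (source_spec hn e (by omega) (by omega)) hsc)
    · have hieq : i = ⟨2, by omega⟩ := Fin.ext h2
      rw [hieq] at hsc
      exact Or.inr (reach_source_eq hn e (source_spec hn e (by omega) (by omega)) hsc)

lemma reach_t2 {s : V} (hs : s ∈ (cOr hn e).sources)
    (h : e ⟨3, by omega⟩ ∈ (cOr hn e).reach s) :
    s = e ⟨2, by omega⟩ ∨ s = e ⟨4, by omega⟩ := by
  rcases h.cases_tail with h | ⟨c, hsc, hc⟩
  · exfalso
    refine hs (e ⟨2, by omega⟩) ?_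
    rw [← h]
    exact D_step hn e 2 3 (by omega) (by omega) (by omega) (by decide)
  · obtain ⟨i, rfl, hlt, hadj⟩ := D_into hn e hc
    simp only [Fin.val_mk] at hadj hlt
    have hi := i.isLt
    have h24 : i.val = 2 ∨ i.val = 4 := by omega
    rcases h24 with h2 | h4
    · have hieq : i = ⟨2, by omega⟩ := Fin.ext h2
      rw [hieq] at hsc
      exact Or.inl (reach_source_eq hn e (source_spec hn e (by omega) (by omega)) hsc)
    · have hieq : i = ⟨4, by omega⟩ := Fin.ext h4
      rw [hieq] at hsc
      exact Or.inr (reach_source_eq hn e (source_spec hn e (by omega) (by omega)) hsc)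

lemma reach_t3 : ∀ k, 5 ≤ k → ∀ (hk : k < n) (s : V), s ∈ (cOr hn e).sources →
    e ⟨k, hk⟩ ∈ (cOr hn e).reach s →
    s = e ⟨4, by omega⟩ ∨ s = e ⟨0, by omega⟩ := by
  intro k
  induction k using Nat.strong_induction_on with
  | _ k ih =>
    intro hk5 hk s hs h
    rcases h.cases_tail with h | ⟨c, hsc, hc⟩
    · exfalso
      refine hs (e ⟨k - 1, by omega⟩) ?_
      rw [← h]
      refine D_step hn e (k - 1) k (by omega) (by omega) (by omega) ?_
      by_cases h5 : k = 5
      · subst h5; decide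
      · rw [crank_of_ge (by omega), crank_of_ge (by omega)]; omega
    · obtain ⟨i, rfl, hlt, hadj⟩ := D_into hn e hc
      simp only [Fin.val_mk] at hadj hlt
      have hi := i.isLt
      have hcr : ¬ (i.val = k + 1) := by
        intro hik
        rw [hik, crank_of_ge (by omega), crank_of_ge (by omega)] at hlt
        omega
      have hcase : i.val = k - 1 ∨ (i.val = 0 ∧ k = n - 1) := by omega
      rcases hcase with hk1 | ⟨h0, -⟩
      · by_cases hk6 : 6 ≤ k
        · have hieq : i = ⟨k - 1, by omega⟩ := Fin.ext hk1
          rw [hieq] at hsc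
          exact ih (k - 1) (by omega) (by omega) (by omega) s hs hsc
        · have hieq : i = ⟨4, by omega⟩ := Fin.ext (show i.val = 4 by omega)
          rw [hieq] at hsc
          exact Or.inl (reach_source_eq hn e (source_spec hn e (by omega) (by omega)) hsc)
      · have hieq : i = ⟨0, by omega⟩ := Fin.ext h0
        rw [hieq] at hsc
        exact Or.inr (reach_source_eq hn e (source_spec hn e (by omega) (by omega)) hsc)

lemma chain_up : ∀ k, ∀ (hk5 : 5 ≤ k) (hk : k < n),
    e ⟨k, hk⟩ ∈ (cOr hn e).reach (e ⟨4, by omega⟩) := by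
  intro k hk5
  induction k, hk5 using Nat.le_induction with
  | base =>
    intro hk
    exact Relation.ReflTransGen.single
      (D_step hn e 4 5 (by omega) (by omega) (by omega) (by decide))
  | succ k hk ih =>
    intro hkn
    exact Relation.ReflTransGen.tail (ih (by omega))
      (D_step hn e k (k + 1) (by omega) (by omega) (by omega)
        (by rw [crank_of_ge (by omega), crank_of_ge (by omega)]; omega))

end Orientation


/-- If a simple graph `H` contains an induced cycle of length at
least 6, then there is an acyclic orientation of `H` all of whose DAG tree
decompositions have width at least 2 (i.e. `dtw(H) ≥ 2`). -/
theorem dtw_ge_two_of_licl_ge_six {V : Type} [Fintype V] (H : SimpleGraph V)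
    (hlicl : ∃ n : ℕ, 6 ≤ n ∧ HasInducedCycleOfLength H n) :
    ∃ O : GraphOrientation H, ∀ (ι : Type) (tree : SimpleGraph ι) (bag : ι → Set V),
      IsPDTD O O.sources tree bag → 2 ≤ bagWidth bag := by
  classical
  obtain ⟨n, hn, ⟨e⟩⟩ := hlicl
  refine ⟨cOr hn e, ?_⟩
  intro ι tree bag hpdtd
  obtain ⟨hfin, htree, hsub, hcover, hcond⟩ := hpdtd
  by_contra hw
  have : Finite ι := hfin
  have hbag1 : ∀ i, (bag i).ncard ≤ 1 := by
    intro i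
    by_contra h1
    push_neg at h1
    have hb : BddAbove (Set.range fun i => (bag i).ncard) := (Set.finite_range _).bddAbove
    have h2 : (bag i).ncard ≤ bagWidth bag := le_ciSup hb i
    exact hw (le_trans h1 h2)
  set O := cOr hn e with hO
  set s1 := e ⟨0, by omega⟩ with hs1def
  set s2 := e ⟨2, by omega⟩ with hs2def
  set s3 := e ⟨4, by omega⟩ with hs3def
  set t1 := e ⟨1, by omega⟩ with ht1def
  set t2 := e ⟨3, by omega⟩ with ht2def
  set t3 := e ⟨n - 1, by omega⟩ with ht3def
  have hs1 : s1 ∈ O.sources := source_spec hn e (by omega) (by omega)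
  have hs2 : s2 ∈ O.sources := source_spec hn e (by omega) (by omega)
  have hs3 : s3 ∈ O.sources := source_spec hn e (by omega) (by omega)
  have hne12 : s1 ≠ s2 := fun h => by
    have := congrArg Fin.val (e.injective h); simp at this
  have hne13 : s1 ≠ s3 := fun h => by
    have := congrArg Fin.val (e.injective h); simp at this
  have hne23 : s2 ≠ s3 := fun h => by
    have := congrArg Fin.val (e.injective h); simp at this
  -- reachability of the three "private" vertices
  have ht1r1 : t1 ∈ O.reach s1 :=
    Relation.ReflTransGen.single (D_step hn e 0 1 (by omega) (by omega) (by omega) (by decide))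
  have ht1r2 : t1 ∈ O.reach s2 :=
    Relation.ReflTransGen.single (D_step hn e 2 1 (by omega) (by omega) (by omega) (by decide))
  have ht2r2 : t2 ∈ O.reach s2 :=
    Relation.ReflTransGen.single (D_step hn e 2 3 (by omega) (by omega) (by omega) (by decide))
  have ht2r3 : t2 ∈ O.reach s3 :=
    Relation.ReflTransGen.single (D_step hn e 4 3 (by omega) (by omega) (by omega) (by decide))
  have ht3r3 : t3 ∈ O.reach s3 := chain_up hn e (n - 1) (by omega) (by omega)
  have ht3r1 : t3 ∈ O.reach s1 :=
    Relation.ReflTransGen.single (D_step hn e 0 (n - 1) (by omega) (by omega) (by omega)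
      (by rw [crank_of_ge (k := n - 1) (by omega), show crank 0 = 0 from rfl]; omega))
  -- bag indices containing the sources
  obtain ⟨i1, hi1⟩ : ∃ i, s1 ∈ bag i := Set.mem_iUnion.mp (hcover ▸ hs1)
  obtain ⟨i2, hi2⟩ : ∃ i, s2 ∈ bag i := Set.mem_iUnion.mp (hcover ▸ hs2)
  obtain ⟨i3, hi3⟩ : ∃ i, s3 ∈ bag i := Set.mem_iUnion.mp (hcover ▸ hs3)
  obtain ⟨m, pab, pbc, pac, hpab, hpbc, hpac, hmab, hmbc, hmac⟩ := tree_median htree i1 i2 i3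
  have key : ∀ (ia ib : ι) (p : tree.Walk ia ib), p.IsPath → m ∈ p.support →
      ∀ (sa sb t : V), sa ∈ bag ia → sb ∈ bag ib → t ∈ O.reach sa → t ∈ O.reach sb →
      ∃ σ ∈ bag m, t ∈ O.reach σ := by
    intro ia ib p hp hm sa sb t ha hb hra hrb
    have h1 : t ∈ O.reachSet (bag ia) ∩ O.reachSet (bag ib) :=
      ⟨Set.mem_biUnion ha hra, Set.mem_biUnion hb hrb⟩
    have h2 := hcond ia m ib p hp hm h1
    simpa [GraphOrientation.reachSet, Set.mem_iUnion] using h2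
  obtain ⟨σ1, hσ1m, hσ1r⟩ := key i1 i2 pab hpab hmab s1 s2 t1 hi1 hi2 ht1r1 ht1r2
  obtain ⟨σ2, hσ2m, hσ2r⟩ := key i2 i3 pbc hpbc hmbc s2 s3 t2 hi2 hi3 ht2r2 ht2r3
  obtain ⟨σ3, hσ3m, hσ3r⟩ := key i1 i3 pac hpac hmac s1 s3 t3 hi1 hi3 ht3r1 ht3r3
  have hσ1s : σ1 = s1 ∨ σ1 = s2 := reach_t1 hn e (hsub m hσ1m) hσ1r
  have hσ2s : σ2 = s2 ∨ σ2 = s3 := reach_t2 hn e (hsub m hσ2m) hσ2r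
  have hσ3s : σ3 = s3 ∨ σ3 = s1 := reach_t3 hn e (n - 1) (by omega) (by omega) σ3
    (hsub m hσ3m) hσ3r
  have heq12 : σ1 = σ2 :=
    (Set.ncard_le_one (Set.toFinite _)).mp (hbag1 m) σ1 hσ1m σ2 hσ2m
  have heq13 : σ1 = σ3 :=
    (Set.ncard_le_one (Set.toFinite _)).mp (hbag1 m) σ1 hσ1m σ3 hσ3m
  rcases hσ1s with h | h
  · rcases hσ2s with h' | h'
    · exact hne12 (h ▸ heq12 ▸ h')
    · exact hne13 (h ▸ heq12 ▸ h')
  · rcases hσ2s with h' | h'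
    · rcases hσ3s with h'' | h''
      · exact hne23 (h ▸ heq13 ▸ h'')
      · exact hne12 (by rw [← h, heq13, h''])
    · exact hne23 (h ▸ heq12 ▸ h')
end

section
/- Let G be a finite simple graph with vertex set {u_1, …, u_n}, let ℓ ≥ 2 and q ∈ {0,1,2}, and set r = 3ℓ + q (so r ≥ 6). Define the simple graph G_core as follows: its vertex set contains three pairwise disjoint copies V1 = {w_1,…,w_n}, V2 = {x_1,…,x_n}, V3 = {y_1,…,y_n} of V(G), with no edges inside V1 ∪ V2 ∪ V3; and for every edge e = {u_i, u_j} of G one adds six paths whose internal vertices are new and distinct across all paths: a path of length ℓ from w_i to x_j, a path of length ℓ from w_j to x_i, a path of length ℓ + ⌊q/2⌋ from x_i to y_j, a path of length ℓ + ⌊q/2⌋ from x_j to y_i, a path of length ℓ + ⌊(q+1)/2⌋ from w_i to y_j, and a path of length ℓ + ⌊(q+1)/2⌋ from w_j to y_i; these path edges are all the edges of G_core. Let P′ be the partition of V(G_core) whose parts are V1, V2, V3 together with, for each of the three pairs (V1,V2), (V2,V3), (V1,V3) and each internal position i along the corresponding paths, the set of all internal vertices of those paths at distance i along the path from the endpoint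 in the first set of the pair; P′ has exactly r parts. Then the number of subgraphs of G_core that are cycles of length r containing exactly one vertex from each part of P′ equals 6 times the number of triangles in G. -/
/-- The three classes of connecting paths in the core construction: between the
first and second copies (`AB`, i.e. `V1`–`V2`), the second and third (`BC`, i.e.
`V2`–`V3`), and the first and third (`AC`, i.e. `V1`–`V3`). -/
inductive PairClass : Type
  | AB | BC | AC

/-- The number of internal vertices of a connecting path of class `c`: the path
lengths are `ℓ`, `ℓ + ⌊q/2⌋` and `ℓ + ⌊(q+1)/2⌋` respectively. -/
def inLen (ℓ q : ℕ) : PairClass → ℕ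
  | .AB => ℓ - 1
  | .BC => ℓ + q / 2 - 1
  | .AC => ℓ + (q + 1) / 2 - 1

/-- The copy of `V(G)` in which a path of class `c` starts. -/
def srcCopy : PairClass → Fin 3
  | .AB => 0
  | .BC => 1
  | .AC => 0

/-- The copy of `V(G)` in which a path of class `c` ends. -/
def dstCopy : PairClass → Fin 3
  | .AB => 1
  | .BC => 2
  | .AC => 2

/-- The vertices of the core graph `G_core`: three copies of `V(G)` together with,
for every class `c`, every ordered adjacent pair `(a, b)` of `G`, the internal
vertices (indexed by their position) of a path of class `c` associated to `(a,b)`. -/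
def CoreV (V : Type) (G : SimpleGraph V) (ℓ q : ℕ) : Type :=
  (Fin 3 × V) ⊕ (Σ c : PairClass, {p : V × V // G.Adj p.1 p.2} × Fin (inLen ℓ q c))

/-- The base edge relation of the core graph: for every class `c` and every ordered
adjacent pair `e = (a, b)` of `G`, a path from the vertex `(srcCopy c, a)` through
the internal vertices `(c, e, 0), (c, e, 1), …` to the vertex `(dstCopy c, b)`. -/
def coreRel {V : Type} (G : SimpleGraph V) (ℓ q : ℕ) :
    CoreV V G ℓ q → CoreV V G ℓ q → Prop := fun x y =>
  ∃ (c : PairClass) (e : {p : V × V // G.Adj p.1 p.2}) (i : Fin (inLen ℓ q c)),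
    ((i : ℕ) = 0 ∧ x = Sum.inl (srcCopy c, e.1.1) ∧ y = Sum.inr ⟨c, e, i⟩) ∨
    ((i : ℕ) = inLen ℓ q c - 1 ∧ x = Sum.inr ⟨c, e, i⟩ ∧
      y = Sum.inl (dstCopy c, e.1.2)) ∨
    (∃ j : Fin (inLen ℓ q c), (j : ℕ) = (i : ℕ) + 1 ∧
      x = Sum.inr ⟨c, e, i⟩ ∧ y = Sum.inr ⟨c, e, j⟩)

/-- The core graph `G_core` of the lower-bound construction. -/
def coreGraph {V : Type} (G : SimpleGraph V) (ℓ q : ℕ) :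
    SimpleGraph (CoreV V G ℓ q) :=
  SimpleGraph.fromRel (coreRel G ℓ q)

/-- The partition `P'` of the vertices of `G_core`, given as the fibers of this map:
the three copies `V1`, `V2`, `V3` of `V(G)`, and for each path class and each
internal position along those paths, the set of all internal path vertices of that
class at that position. -/
def corePart {V : Type} (G : SimpleGraph V) (ℓ q : ℕ) :
    CoreV V G ℓ q → Fin 3 ⊕ Σ c : PairClass, Fin (inLen ℓ q c)
  | Sum.inl (t, _) => Sum.inl t
  | Sum.inr ⟨c, _, i⟩ => Sum.inr ⟨c, i⟩

namespace CoreProof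

abbrev PartT (ℓ q : ℕ) : Type := Fin 3 ⊕ Σ c : PairClass, Fin (inLen ℓ q c)

abbrev EdgeT {V : Type} (G : SimpleGraph V) := {p : V × V // G.Adj p.1 p.2}

def Tri {V : Type} (G : SimpleGraph V) : Type :=
  {p : V × V × V // G.Adj p.1 p.2.1 ∧ G.Adj p.2.1 p.2.2 ∧ G.Adj p.1 p.2.2}

variable {V : Type} {G : SimpleGraph V} {ℓ q : ℕ}

def edgeOf (t : Tri G) : PairClass → EdgeT G
  | .AB => ⟨(t.1.1, t.1.2.1), t.2.1⟩
  | .BC => ⟨(t.1.2.1, t.1.2.2), t.2.2.1⟩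
  | .AC => ⟨(t.1.1, t.1.2.2), t.2.2.2⟩

def vOf (t : Tri G) : Fin 3 → V
  | 0 => t.1.1
  | 1 => t.1.2.1
  | 2 => t.1.2.2

lemma edgeOf_src (t : Tri G) (c : PairClass) :
    (edgeOf t c).1.1 = vOf t (srcCopy c) := by cases c <;> rfl

lemma edgeOf_dst (t : Tri G) (c : PairClass) :
    (edgeOf t c).1.2 = vOf t (dstCopy c) := by cases c <;> rfl

def stdSel (t : Tri G) : PartT ℓ q → CoreV V G ℓ q
  | .inl i => .inl (i, vOf t i)
  | .inr ⟨c, i⟩ => .inr ⟨c, edgeOf t c, i⟩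

lemma part_stdSel (t : Tri G) (p : PartT ℓ q) :
    corePart G ℓ q (stdSel t p) = p := by
  rcases p with i | ⟨c, i⟩ <;> rfl

lemma stdSel_injective (t : Tri G) : Function.Injective (stdSel (ℓ := ℓ) (q := q) t) := by
  intro p p' h
  rw [← part_stdSel t p, ← part_stdSel t p', h]

lemma coreInr_inj {c c' : PairClass} {e e' : EdgeT G} {i : Fin (inLen ℓ q c)}
    {i' : Fin (inLen ℓ q c')}
    (h : (Sum.inr ⟨c, e, i⟩ : CoreV V G ℓ q) = Sum.inr ⟨c', e', i'⟩) :
    c = c' ∧ e = e' ∧ (i : ℕ) = (i' : ℕ) := by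
  have h1 := Sum.inr.inj h
  obtain ⟨rfl, h2⟩ := Sigma.mk.inj_iff.mp h1
  have h3 : (e, i) = (e', i') := eq_of_heq h2
  obtain ⟨rfl, rfl⟩ := Prod.mk.inj h3
  exact ⟨rfl, rfl, rfl⟩


def nextRel (ℓ q : ℕ) : PartT ℓ q → PartT ℓ q → Prop := fun p p' =>
  ∃ c : PairClass,
    (∃ i : Fin (inLen ℓ q c), (i : ℕ) = 0 ∧ p = .inl (srcCopy c) ∧ p' = .inr ⟨c, i⟩) ∨
    (∃ i : Fin (inLen ℓ q c), (i : ℕ) = inLen ℓ q c - 1 ∧ p = .inr ⟨c, i⟩ ∧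
      p' = .inl (dstCopy c)) ∨
    (∃ i j : Fin (inLen ℓ q c), (j : ℕ) = (i : ℕ) + 1 ∧ p = .inr ⟨c, i⟩ ∧ p' = .inr ⟨c, j⟩)

lemma partInr_inj {c c' : PairClass} {i : Fin (inLen ℓ q c)} {i' : Fin (inLen ℓ q c')}
    (h : (Sum.inr ⟨c, i⟩ : PartT ℓ q) = Sum.inr ⟨c', i'⟩) :
    c = c' ∧ (i : ℕ) = (i' : ℕ) := by
  have h1 := Sum.inr.inj h
  obtain ⟨rfl, h2⟩ := Sigma.mk.inj_iff.mp h1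
  exact ⟨rfl, by rw [eq_of_heq h2]⟩

lemma nextRel_ne {p p' : PartT ℓ q} (h : nextRel ℓ q p p') : p ≠ p' := by
  obtain ⟨c, ⟨i, hi, rfl, rfl⟩ | ⟨i, hi, rfl, rfl⟩ | ⟨i, j, hj, rfl, rfl⟩⟩ := h
  · simp
  · simp
  · intro hh
    have := (partInr_inj hh).2
    omega

lemma coreRel_stdSel (t : Tri G) (p p' : PartT ℓ q) :
    coreRel G ℓ q (stdSel t p) (stdSel t p') ↔ nextRel ℓ q p p' := by
  constructor
  · rintro ⟨c, e, i, ⟨hi, hx, hy⟩ | ⟨hi, hx, hy⟩ | ⟨j, hj, hx, hy⟩⟩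
    · -- src → internal 0
      rcases p' with i' | ⟨c', i'⟩
      · simp [stdSel] at hy
      · obtain ⟨rfl, he, hii⟩ := coreInr_inj hy.symm
        rcases p with i'' | ⟨c'', i''⟩
        · refine ⟨c, Or.inl ⟨i', by omega, ?_, rfl⟩⟩
          have hx' := congrArg Prod.fst (Sum.inl.inj hx)
          simp only [] at hx'
          rw [show i'' = srcCopy c from hx']
        · simp [stdSel] at hx
    · rcases p with i'' | ⟨c'', i''⟩
      · simp [stdSel] at hx
      · obtain ⟨rfl, he, hii⟩ := coreInr_inj hx.symm
        rcases p' with i' | ⟨c', i'⟩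
        · refine ⟨c, Or.inr (Or.inl ⟨i'', by omega, rfl, ?_⟩)⟩
          have hy' := congrArg Prod.fst (Sum.inl.inj hy)
          simp only [] at hy'
          rw [show i' = dstCopy c from hy']
        · simp [stdSel] at hy
    · rcases p with i'' | ⟨c'', i''⟩
      · simp [stdSel] at hx
      · obtain ⟨rfl, he, hii⟩ := coreInr_inj hx.symm
        rcases p' with i' | ⟨c', i'⟩
        · simp [stdSel] at hy
        · obtain ⟨rfl, he', hjj⟩ := coreInr_inj hy.symm
          exact ⟨c, Or.inr (Or.inr ⟨i'', i', by omega, rfl, rfl⟩)⟩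
  · rintro ⟨c, ⟨i, hi, rfl, rfl⟩ | ⟨i, hi, rfl, rfl⟩ | ⟨i, j, hj, rfl, rfl⟩⟩
    · exact ⟨c, edgeOf t c, i, Or.inl ⟨hi, by rw [stdSel, edgeOf_src], rfl⟩⟩
    · exact ⟨c, edgeOf t c, i, Or.inr (Or.inl ⟨hi, rfl, by rw [stdSel, edgeOf_dst]⟩)⟩
    · exact ⟨c, edgeOf t c, i, Or.inr (Or.inr ⟨j, hj, rfl, rfl⟩)⟩

def std (t : Tri G) : (coreGraph G ℓ q).Subgraph where
  verts := Set.range (stdSel t)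
  Adj u v := ∃ p p' : PartT ℓ q, (nextRel ℓ q p p' ∨ nextRel ℓ q p' p) ∧
    u = stdSel t p ∧ v = stdSel t p'
  adj_sub := by
    rintro u v ⟨p, p', h, rfl, rfl⟩
    rw [coreGraph, SimpleGraph.fromRel_adj]
    refine ⟨?_, ?_⟩
    · intro hh
      have := stdSel_injective t hh
      rcases h with h | h
      · exact nextRel_ne h this
      · exact nextRel_ne h this.symm
    · rcases h with h | h
      · exact Or.inl ((coreRel_stdSel t p p').mpr h)
      · exact Or.inr ((coreRel_stdSel t p' p).mpr h)
  edge_vert := by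
    rintro u v ⟨p, p', h, rfl, rfl⟩
    exact ⟨p, rfl⟩
  symm := by
    constructor
    rintro u v ⟨p, p', h, rfl, rfl⟩
    exact ⟨p', p, h.symm, rfl, rfl⟩



def kOf (ℓ q : ℕ) : PartT ℓ q → ℕ
  | .inl ⟨0, _⟩ => 0
  | .inl ⟨1, _⟩ => ℓ
  | .inl ⟨_ + 2, _⟩ => 2 * ℓ + q / 2
  | .inr ⟨.AB, i⟩ => (i : ℕ) + 1
  | .inr ⟨.BC, i⟩ => ℓ + 1 + (i : ℕ)
  | .inr ⟨.AC, i⟩ => 3 * ℓ + q - 1 - (i : ℕ)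

lemma inLen_AB : inLen ℓ q .AB = ℓ - 1 := rfl
lemma inLen_BC : inLen ℓ q .BC = ℓ + q / 2 - 1 := rfl
lemma inLen_AC : inLen ℓ q .AC = ℓ + (q + 1) / 2 - 1 := rfl

lemma kOf_lt (hℓ : 2 ≤ ℓ) (p : PartT ℓ q) : kOf ℓ q p < 3 * ℓ + q := by
  rcases p with ⟨i, hi3⟩ | ⟨c, i⟩
  · match i, hi3 with
    | 0, _ => simp only [kOf]; omega
    | 1, _ => simp only [kOf]; omega
    | 2, _ => simp only [kOf]; omega
  · have hi := i.2
    cases c <;> simp only [kOf, inLen_AB, inLen_BC, inLen_AC] at * <;> omega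

def pt (ℓ q : ℕ) : Fin (3 * ℓ + q) → PartT ℓ q := fun k =>
  if _ : (k : ℕ) = 0 then .inl 0
  else if h1 : (k : ℕ) < ℓ then
    .inr ⟨.AB, ⟨(k : ℕ) - 1, by rw [inLen_AB]; omega⟩⟩
  else if _ : (k : ℕ) = ℓ then .inl 1
  else if h3 : (k : ℕ) < 2 * ℓ + q / 2 then
    .inr ⟨.BC, ⟨(k : ℕ) - ℓ - 1, by rw [inLen_BC]; omega⟩⟩
  else if _ : (k : ℕ) = 2 * ℓ + q / 2 then .inl 2
  else .inr ⟨.AC, ⟨3 * ℓ + q - 1 - (k : ℕ), by have := k.2; rw [inLen_AC]; omega⟩⟩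

lemma pt_eq_zero (k : Fin (3 * ℓ + q)) (h : (k : ℕ) = 0) : pt ℓ q k = .inl 0 := by
  rw [pt, dif_pos h]

lemma pt_eq_AB (k : Fin (3 * ℓ + q)) (h0 : (k : ℕ) ≠ 0) (h1 : (k : ℕ) < ℓ) :
    pt ℓ q k = .inr ⟨.AB, ⟨(k : ℕ) - 1, by rw [inLen_AB]; omega⟩⟩ := by
  rw [pt, dif_neg h0, dif_pos h1]

lemma pt_eq_one (k : Fin (3 * ℓ + q)) (h0 : (k : ℕ) ≠ 0) (h1 : ¬ (k : ℕ) < ℓ)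
    (h2 : (k : ℕ) = ℓ) : pt ℓ q k = .inl 1 := by
  rw [pt, dif_neg h0, dif_neg h1, dif_pos h2]

lemma pt_eq_BC (k : Fin (3 * ℓ + q)) (h0 : (k : ℕ) ≠ 0) (h1 : ¬ (k : ℕ) < ℓ)
    (h2 : (k : ℕ) ≠ ℓ) (h3 : (k : ℕ) < 2 * ℓ + q / 2) :
    pt ℓ q k = .inr ⟨.BC, ⟨(k : ℕ) - ℓ - 1, by rw [inLen_BC]; omega⟩⟩ := by
  rw [pt, dif_neg h0, dif_neg h1, dif_neg h2, dif_pos h3]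

lemma pt_eq_two (k : Fin (3 * ℓ + q)) (h0 : (k : ℕ) ≠ 0) (h1 : ¬ (k : ℕ) < ℓ)
    (h2 : (k : ℕ) ≠ ℓ) (h3 : ¬ (k : ℕ) < 2 * ℓ + q / 2) (h4 : (k : ℕ) = 2 * ℓ + q / 2) :
    pt ℓ q k = .inl 2 := by
  rw [pt, dif_neg h0, dif_neg h1, dif_neg h2, dif_neg h3, dif_pos h4]

lemma pt_eq_AC (k : Fin (3 * ℓ + q)) (h0 : (k : ℕ) ≠ 0) (h1 : ¬ (k : ℕ) < ℓ)
    (h2 : (k : ℕ) ≠ ℓ) (h3 : ¬ (k : ℕ) < 2 * ℓ + q / 2) (h4 : (k : ℕ) ≠ 2 * ℓ + q / 2) :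
    pt ℓ q k = .inr ⟨.AC, ⟨3 * ℓ + q - 1 - (k : ℕ),
      by have := k.2; rw [inLen_AC]; omega⟩⟩ := by
  rw [pt, dif_neg h0, dif_neg h1, dif_neg h2, dif_neg h3, dif_neg h4]

lemma inr_mk_eq {c : PairClass} {i j : Fin (inLen ℓ q c)} (h : (i : ℕ) = (j : ℕ)) :
    (Sum.inr ⟨c, i⟩ : PartT ℓ q) = Sum.inr ⟨c, j⟩ := by
  rw [Fin.ext h]

lemma kOf_inl0 : kOf ℓ q (.inl 0) = 0 := rfl
lemma kOf_inl1 : kOf ℓ q (.inl 1) = ℓ := rfl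
lemma kOf_inl2 : kOf ℓ q (.inl 2) = 2 * ℓ + q / 2 := rfl
lemma kOf_AB (i : Fin (inLen ℓ q .AB)) : kOf ℓ q (.inr ⟨.AB, i⟩) = (i : ℕ) + 1 := rfl
lemma kOf_BC (i : Fin (inLen ℓ q .BC)) : kOf ℓ q (.inr ⟨.BC, i⟩) = ℓ + 1 + (i : ℕ) := rfl
lemma kOf_AC (i : Fin (inLen ℓ q .AC)) :
    kOf ℓ q (.inr ⟨.AC, i⟩) = 3 * ℓ + q - 1 - (i : ℕ) := rfl

lemma pt_kOf (hℓ : 2 ≤ ℓ) (p : PartT ℓ q) :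
    pt ℓ q ⟨kOf ℓ q p, kOf_lt hℓ p⟩ = p := by
  rcases p with ⟨i, hi3⟩ | ⟨c, i⟩
  · match i, hi3 with
    | 0, h => exact pt_eq_zero _ rfl
    | 1, h =>
      exact pt_eq_one _ (show ℓ ≠ 0 by omega) (show ¬ ℓ < ℓ by omega) rfl
    | 2, h =>
      exact pt_eq_two _ (show 2 * ℓ + q / 2 ≠ 0 by omega)
        (show ¬ 2 * ℓ + q / 2 < ℓ by omega) (show 2 * ℓ + q / 2 ≠ ℓ by omega)
        (show ¬ 2 * ℓ + q / 2 < 2 * ℓ + q / 2 by omega) rfl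
  · cases c
    · have hi : (i : ℕ) < ℓ - 1 := lt_of_lt_of_eq i.2 inLen_AB
      refine (pt_eq_AB _ (show (i : ℕ) + 1 ≠ 0 by omega)
        (show (i : ℕ) + 1 < ℓ by omega)).trans ?_
      exact inr_mk_eq (show (i : ℕ) + 1 - 1 = (i : ℕ) by omega)
    · have hi : (i : ℕ) < ℓ + q / 2 - 1 := lt_of_lt_of_eq i.2 inLen_BC
      refine (pt_eq_BC _ (show ℓ + 1 + (i : ℕ) ≠ 0 by omega)
        (show ¬ ℓ + 1 + (i : ℕ) < ℓ by omega) (show ℓ + 1 + (i : ℕ) ≠ ℓ by omega)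
        (show ℓ + 1 + (i : ℕ) < 2 * ℓ + q / 2 by omega)).trans ?_
      exact inr_mk_eq (show ℓ + 1 + (i : ℕ) - ℓ - 1 = (i : ℕ) by omega)
    · have hi : (i : ℕ) < ℓ + (q + 1) / 2 - 1 := lt_of_lt_of_eq i.2 inLen_AC
      refine (pt_eq_AC _ (show 3 * ℓ + q - 1 - (i : ℕ) ≠ 0 by omega)
        (show ¬ 3 * ℓ + q - 1 - (i : ℕ) < ℓ by omega)
        (show 3 * ℓ + q - 1 - (i : ℕ) ≠ ℓ by omega)
        (show ¬ 3 * ℓ + q - 1 - (i : ℕ) < 2 * ℓ + q / 2 by omega)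
        (show 3 * ℓ + q - 1 - (i : ℕ) ≠ 2 * ℓ + q / 2 by omega)).trans ?_
      exact inr_mk_eq
        (show 3 * ℓ + q - 1 - (3 * ℓ + q - 1 - (i : ℕ)) = (i : ℕ) by omega)

lemma kOf_pt (hℓ : 2 ≤ ℓ) (k : Fin (3 * ℓ + q)) : kOf ℓ q (pt ℓ q k) = (k : ℕ) := by
  have hk := k.2
  by_cases h0 : (k : ℕ) = 0
  · rw [pt_eq_zero k h0, kOf_inl0]; omega
  by_cases h1 : (k : ℕ) < ℓ
  · rw [pt_eq_AB k h0 h1]; show (k : ℕ) - 1 + 1 = (k : ℕ); omega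
  by_cases h2 : (k : ℕ) = ℓ
  · rw [pt_eq_one k h0 h1 h2, kOf_inl1]; omega
  by_cases h3 : (k : ℕ) < 2 * ℓ + q / 2
  · rw [pt_eq_BC k h0 h1 h2 h3]; show ℓ + 1 + ((k : ℕ) - ℓ - 1) = (k : ℕ); omega
  by_cases h4 : (k : ℕ) = 2 * ℓ + q / 2
  · rw [pt_eq_two k h0 h1 h2 h3 h4, kOf_inl2]; omega
  · rw [pt_eq_AC k h0 h1 h2 h3 h4]
    show 3 * ℓ + q - 1 - (3 * ℓ + q - 1 - (k : ℕ)) = (k : ℕ); omega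

lemma pt_injective (hℓ : 2 ≤ ℓ) : Function.Injective (pt ℓ q) := by
  intro k k' h
  have h1 := kOf_pt (q := q) hℓ k
  have h2 := kOf_pt (q := q) hℓ k'
  rw [h] at h1
  rw [Fin.ext_iff]
  omega

lemma pt_surjective (hℓ : 2 ≤ ℓ) : Function.Surjective (pt ℓ q) := fun p =>
  ⟨⟨kOf ℓ q p, kOf_lt hℓ p⟩, pt_kOf hℓ p⟩


lemma val_succ (hℓ : 2 ≤ ℓ) [NeZero (3 * ℓ + q)] (k : Fin (3 * ℓ + q)) :
    ((k + 1 : Fin (3 * ℓ + q)) : ℕ) =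
      if (k : ℕ) + 1 = 3 * ℓ + q then 0 else (k : ℕ) + 1 := by
  have hk := k.2
  have h1 : ((1 : Fin (3 * ℓ + q)) : ℕ) = 1 := by
    rw [Fin.val_one', Nat.mod_eq_of_lt (by omega)]
  rw [Fin.add_def]
  show ((k : ℕ) + ((1 : Fin (3 * ℓ + q)) : ℕ)) % (3 * ℓ + q) = _
  rw [h1]
  split_ifs with h
  · rw [h, Nat.mod_self]
  · rw [Nat.mod_eq_of_lt (by omega)]

lemma nextRel_adj (hℓ : 2 ≤ ℓ) {p p' : PartT ℓ q} (h : nextRel ℓ q p p') :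
    kOf ℓ q p' = kOf ℓ q p + 1 ∨ kOf ℓ q p = kOf ℓ q p' + 1 ∨
      (kOf ℓ q p' = 3 * ℓ + q - 1 ∧ kOf ℓ q p = 0) := by
  obtain ⟨c, ⟨i, hi, rfl, rfl⟩ | ⟨i, hi, rfl, rfl⟩ | ⟨i, j, hj, rfl, rfl⟩⟩ := h <;> cases c
  · left; rw [show srcCopy .AB = 0 from rfl, kOf_inl0, kOf_AB]; omega
  · left; rw [show srcCopy .BC = 1 from rfl, kOf_inl1, kOf_BC]; omega
  · right; right
    rw [show srcCopy .AC = 0 from rfl, kOf_inl0, kOf_AC]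
    exact ⟨by omega, rfl⟩
  · have hi' : (i : ℕ) = ℓ - 1 - 1 := hi.trans (by rw [inLen_AB])
    left; rw [show dstCopy .AB = 1 from rfl, kOf_inl1, kOf_AB]; omega
  · have hi' : (i : ℕ) = ℓ + q / 2 - 1 - 1 := hi.trans (by rw [inLen_BC])
    have hb := lt_of_lt_of_eq i.2 inLen_BC
    left; rw [show dstCopy .BC = 2 from rfl, kOf_inl2, kOf_BC]; omega
  · have hi' : (i : ℕ) = ℓ + (q + 1) / 2 - 1 - 1 := hi.trans (by rw [inLen_AC])
    have hb := lt_of_lt_of_eq i.2 inLen_AC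
    right; left
    rw [show dstCopy .AC = 2 from rfl, kOf_inl2, kOf_AC]; omega
  · left; rw [kOf_AB, kOf_AB]; omega
  · left; rw [kOf_BC, kOf_BC]; omega
  · have hbi := lt_of_lt_of_eq i.2 inLen_AC
    have hbj := lt_of_lt_of_eq j.2 inLen_AC
    right; left
    rw [kOf_AC, kOf_AC]; omega

lemma nextRel_succ (hℓ : 2 ≤ ℓ) [NeZero (3 * ℓ + q)] (k : Fin (3 * ℓ + q)) :
    nextRel ℓ q (pt ℓ q k) (pt ℓ q (k + 1)) ∨
      nextRel ℓ q (pt ℓ q (k + 1)) (pt ℓ q k) := by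
  have hk := k.2
  have hvs := val_succ hℓ k
  by_cases hI : (k : ℕ) = 3 * ℓ + q - 1
  · right
    have hkn : ((k + 1 : Fin (3 * ℓ + q)) : ℕ) = 0 := by
      rw [hvs, if_pos (by omega)]
    rw [pt_eq_zero _ hkn,
      pt_eq_AC k (by omega) (by omega) (by omega) (by omega) (by omega)]
    refine ⟨.AC, Or.inl ⟨_, ?_, rfl, rfl⟩⟩
    show 3 * ℓ + q - 1 - (k : ℕ) = 0
    omega
  have hkn : ((k + 1 : Fin (3 * ℓ + q)) : ℕ) = (k : ℕ) + 1 := by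
    rw [hvs, if_neg (by omega)]
  by_cases hA : (k : ℕ) = 0
  · left
    rw [pt_eq_zero _ hA, pt_eq_AB _ (by omega) (by omega)]
    refine ⟨.AB, Or.inl ⟨_, ?_, rfl, rfl⟩⟩
    show ((k + 1 : Fin (3 * ℓ + q)) : ℕ) - 1 = 0
    omega
  by_cases hB : (k : ℕ) < ℓ - 1
  · left
    rw [pt_eq_AB k (by omega) (by omega), pt_eq_AB _ (by omega) (by omega)]
    refine ⟨.AB, Or.inr (Or.inr ⟨_, _, ?_, rfl, rfl⟩)⟩
    show ((k + 1 : Fin (3 * ℓ + q)) : ℕ) - 1 = (k : ℕ) - 1 + 1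
    omega
  by_cases hC : (k : ℕ) = ℓ - 1
  · left
    rw [pt_eq_AB k (by omega) (by omega),
      pt_eq_one _ (by omega) (by omega) (by omega)]
    refine ⟨.AB, Or.inr (Or.inl ⟨_, ?_, rfl, rfl⟩)⟩
    show (k : ℕ) - 1 = inLen ℓ q .AB - 1
    rw [inLen_AB]; omega
  by_cases hD : (k : ℕ) = ℓ
  · left
    rw [pt_eq_one k (by omega) (by omega) hD,
      pt_eq_BC _ (by omega) (by omega) (by omega) (by omega)]
    refine ⟨.BC, Or.inl ⟨_, ?_, rfl, rfl⟩⟩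
    show ((k + 1 : Fin (3 * ℓ + q)) : ℕ) - ℓ - 1 = 0
    omega
  by_cases hE : (k : ℕ) < 2 * ℓ + q / 2 - 1
  · left
    rw [pt_eq_BC k (by omega) (by omega) (by omega) (by omega),
      pt_eq_BC _ (by omega) (by omega) (by omega) (by omega)]
    refine ⟨.BC, Or.inr (Or.inr ⟨_, _, ?_, rfl, rfl⟩)⟩
    show ((k + 1 : Fin (3 * ℓ + q)) : ℕ) - ℓ - 1 = (k : ℕ) - ℓ - 1 + 1
    omega
  by_cases hF : (k : ℕ) = 2 * ℓ + q / 2 - 1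
  · left
    rw [pt_eq_BC k (by omega) (by omega) (by omega) (by omega),
      pt_eq_two _ (by omega) (by omega) (by omega) (by omega) (by omega)]
    refine ⟨.BC, Or.inr (Or.inl ⟨_, ?_, rfl, rfl⟩)⟩
    show (k : ℕ) - ℓ - 1 = inLen ℓ q .BC - 1
    rw [inLen_BC]; omega
  by_cases hG : (k : ℕ) = 2 * ℓ + q / 2
  · right
    rw [pt_eq_two k (by omega) (by omega) (by omega) (by omega) hG,
      pt_eq_AC _ (by omega) (by omega) (by omega) (by omega) (by omega)]
    refine ⟨.AC, Or.inr (Or.inl ⟨_, ?_, rfl, rfl⟩)⟩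
    show 3 * ℓ + q - 1 - ((k + 1 : Fin (3 * ℓ + q)) : ℕ) = inLen ℓ q .AC - 1
    rw [inLen_AC]; omega
  · right
    rw [pt_eq_AC k (by omega) (by omega) (by omega) (by omega) (by omega),
      pt_eq_AC _ (by omega) (by omega) (by omega) (by omega) (by omega)]
    refine ⟨.AC, Or.inr (Or.inr ⟨_, _, ?_, rfl, rfl⟩)⟩
    show 3 * ℓ + q - 1 - (k : ℕ) = 3 * ℓ + q - 1 - ((k + 1 : Fin (3 * ℓ + q)) : ℕ) + 1
    omega


lemma fin_succ_iff_val (hℓ : 2 ≤ ℓ) [NeZero (3 * ℓ + q)] (k k' : Fin (3 * ℓ + q)) :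
    k' = k + 1 ↔ ((k' : ℕ) = (k : ℕ) + 1 ∨ ((k : ℕ) = 3 * ℓ + q - 1 ∧ (k' : ℕ) = 0)) := by
  have hk := k.2
  have hk' := k'.2
  rw [Fin.ext_iff, val_succ hℓ k]
  split_ifs with h <;> omega

lemma cyc_adj (hℓ : 2 ≤ ℓ) [NeZero (3 * ℓ + q)] (u v : Fin (3 * ℓ + q)) :
    (SimpleGraph.cycleGraph (3 * ℓ + q)).Adj u v ↔ v = u + 1 ∨ u = v + 1 := by
  rw [SimpleGraph.cycleGraph_adj']
  have hsub : ∀ a b : Fin (3 * ℓ + q), ((a - b : Fin (3 * ℓ + q)) : ℕ) = 1 ↔ a = b + 1 := by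
    intro a b
    have h1 : ((1 : Fin (3 * ℓ + q)) : ℕ) = 1 := by
      rw [Fin.val_one', Nat.mod_eq_of_lt (by omega)]
    constructor
    · intro h
      have : a - b = 1 := Fin.ext (by rw [h1]; exact h)
      rw [sub_eq_iff_eq_add] at this
      rw [this]; exact add_comm 1 b
    · intro h
      rw [h]
      have : b + 1 - b = 1 := add_sub_cancel_left b 1
      rw [this, h1]
  rw [hsub, hsub]
  tauto

lemma std_unique (t : Tri G) (p : PartT ℓ q) :
    ∃! v : CoreV V G ℓ q, v ∈ (std t).verts ∧ corePart G ℓ q v = p := by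
  refine ⟨stdSel t p, ⟨⟨p, rfl⟩, part_stdSel t p⟩, ?_⟩
  rintro v ⟨⟨p', rfl⟩, hpart⟩
  rw [part_stdSel] at hpart
  rw [hpart]

noncomputable def stdVertEquiv (hℓ : 2 ≤ ℓ) (t : Tri G) : Fin (3 * ℓ + q) ≃ ((std t).verts : Set (CoreV V G ℓ q)) :=
  Equiv.ofBijective (fun k => ⟨stdSel t (pt ℓ q k), ⟨pt ℓ q k, rfl⟩⟩)
    (by
      constructor
      · intro k k' h
        exact pt_injective hℓ (stdSel_injective t (congrArg Subtype.val h))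
      · rintro ⟨v, p, rfl⟩
        obtain ⟨k, rfl⟩ := pt_surjective hℓ p
        exact ⟨k, rfl⟩)

lemma std_adj_iff (t : Tri G) (p p' : PartT ℓ q) :
    (std t).Adj (stdSel t p) (stdSel t p') ↔ nextRel ℓ q p p' ∨ nextRel ℓ q p' p := by
  constructor
  · rintro ⟨a, a', h, ha, ha'⟩
    rw [stdSel_injective t ha, stdSel_injective t ha']
    exact h
  · intro h
    exact ⟨p, p', h, rfl, rfl⟩

noncomputable def stdIso (hℓ : 2 ≤ ℓ) [NeZero (3 * ℓ + q)] (t : Tri G) :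
    SimpleGraph.cycleGraph (3 * ℓ + q) ≃g ((std t).coe :
      SimpleGraph ((std (ℓ := ℓ) (q := q) t).verts : Set (CoreV V G ℓ q))) where
  toEquiv := stdVertEquiv hℓ t
  map_rel_iff' := by
    intro k k'
    show (std t).coe.Adj ⟨stdSel t (pt ℓ q k), _⟩ ⟨stdSel t (pt ℓ q k'), _⟩ ↔ _
    rw [SimpleGraph.Subgraph.coe_adj]
    rw [std_adj_iff, cyc_adj hℓ]
    constructor
    · rintro (h | h)
      · rcases nextRel_adj hℓ h with h1 | h1 | h1 <;>
          rw [kOf_pt hℓ, kOf_pt hℓ] at h1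
        · left; rw [fin_succ_iff_val hℓ]; left; exact h1
        · right; rw [fin_succ_iff_val hℓ]; left; exact h1
        · right; rw [fin_succ_iff_val hℓ]; right; exact ⟨h1.1, h1.2⟩
      · rcases nextRel_adj hℓ h with h1 | h1 | h1 <;>
          rw [kOf_pt hℓ, kOf_pt hℓ] at h1
        · right; rw [fin_succ_iff_val hℓ]; left; exact h1
        · left; rw [fin_succ_iff_val hℓ]; left; exact h1
        · left; rw [fin_succ_iff_val hℓ]; right; exact ⟨h1.1, h1.2⟩
    · rintro (rfl | rfl)
      · exact nextRel_succ hℓ k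
      · exact (nextRel_succ hℓ k').symm


lemma len_pos (hℓ : 2 ≤ ℓ) (c : PairClass) : 0 < inLen ℓ q c := by
  cases c
  · rw [inLen_AB]; omega
  · rw [inLen_BC]; omega
  · rw [inLen_AC]; omega

lemma part_inr_shape {v : CoreV V G ℓ q} {c : PairClass} {i : Fin (inLen ℓ q c)}
    (h : corePart G ℓ q v = .inr ⟨c, i⟩) : ∃ e : EdgeT G, v = .inr ⟨c, e, i⟩ := by
  rcases v with ⟨j, a⟩ | ⟨c', e, i'⟩
  · exact absurd h (by simp [corePart])
  · have h' : (Sum.inr ⟨c', i'⟩ : PartT ℓ q) = Sum.inr ⟨c, i⟩ := h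
    obtain ⟨rfl, hval⟩ := partInr_inj h'
    exact ⟨e, by rw [Fin.ext hval]⟩

lemma part_inl_shape {v : CoreV V G ℓ q} {j : Fin 3}
    (h : corePart G ℓ q v = .inl j) : ∃ a : V, v = .inl (j, a) := by
  rcases v with ⟨j', a⟩ | ⟨c', e, i'⟩
  · have h' : (Sum.inl j' : PartT ℓ q) = Sum.inl j := h
    exact ⟨a, by rw [Sum.inl.inj h']⟩
  · exact absurd h (by simp [corePart])

lemma coreInr_mk_eq {c : PairClass} {e : EdgeT G} {i j : Fin (inLen ℓ q c)}
    (h : (i : ℕ) = (j : ℕ)) :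
    (Sum.inr ⟨c, e, i⟩ : CoreV V G ℓ q) = Sum.inr ⟨c, e, j⟩ := by
  rw [Fin.ext h]

lemma src_ne_dst (c : PairClass) : srcCopy c ≠ dstCopy c := by cases c <;> decide

def pV (c : PairClass) (e : EdgeT G) (i : Fin (inLen ℓ q c)) : CoreV V G ℓ q :=
  if _ : (i : ℕ) = 0 then .inl (srcCopy c, e.1.1)
  else .inr ⟨c, e, ⟨(i : ℕ) - 1, by have := i.2; omega⟩⟩

def nV (c : PairClass) (e : EdgeT G) (i : Fin (inLen ℓ q c)) : CoreV V G ℓ q :=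
  if _ : (i : ℕ) = inLen ℓ q c - 1 then .inl (dstCopy c, e.1.2)
  else .inr ⟨c, e, ⟨(i : ℕ) + 1, by have hb := i.2; omega⟩⟩

lemma pV_ne_nV (c : PairClass) (e : EdgeT G) (i : Fin (inLen ℓ q c)) :
    pV c e i ≠ nV c e i := by
  by_cases h1 : (i : ℕ) = 0 <;> by_cases h2 : (i : ℕ) = inLen ℓ q c - 1
  · erw [pV, nV, dif_pos h1, dif_pos h2]; intro h
    exact src_ne_dst c (congrArg Prod.fst (Sum.inl.inj h))
  · erw [pV, nV, dif_pos h1, dif_neg h2]; intro h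
    exact Sum.inl_ne_inr h
  · erw [pV, nV, dif_neg h1, dif_pos h2]; intro h
    exact Sum.inr_ne_inl h
  · erw [pV, nV, dif_neg h1, dif_neg h2]; intro h
    have := (coreInr_inj h).2.2
    simp only [] at this
    omega

section Reverse

variable (M : (coreGraph G ℓ q).Subgraph)
variable (hu : ∀ p : PartT ℓ q, ∃! v : CoreV V G ℓ q, v ∈ M.verts ∧ corePart G ℓ q v = p)

noncomputable def sel (p : PartT ℓ q) : CoreV V G ℓ q := (hu p).exists.choose

lemma sel_mem (p : PartT ℓ q) : sel M hu p ∈ M.verts := (hu p).exists.choose_spec.1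

lemma sel_part (p : PartT ℓ q) : corePart G ℓ q (sel M hu p) = p :=
  (hu p).exists.choose_spec.2

lemma sel_eq {v : CoreV V G ℓ q} {p : PartT ℓ q} (hv : v ∈ M.verts)
    (hp : corePart G ℓ q v = p) : v = sel M hu p :=
  (hu p).unique ⟨hv, hp⟩ ⟨sel_mem M hu p, sel_part M hu p⟩

noncomputable def eSel (c : PairClass) (i : Fin (inLen ℓ q c)) : EdgeT G :=
  (part_inr_shape (sel_part M hu (.inr ⟨c, i⟩))).choose

lemma eSel_spec (c : PairClass) (i : Fin (inLen ℓ q c)) :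
    sel M hu (.inr ⟨c, i⟩) = .inr ⟨c, eSel M hu c i, i⟩ :=
  (part_inr_shape (sel_part M hu (.inr ⟨c, i⟩))).choose_spec

lemma adj_internal_sub {c : PairClass} {e : EdgeT G} {i : Fin (inLen ℓ q c)}
    {u : CoreV V G ℓ q} (h : M.Adj (.inr ⟨c, e, i⟩) u) : u = pV c e i ∨ u = nV c e i := by
  have hadj := M.adj_sub h
  replace hadj := (SimpleGraph.fromRel_adj _ _ _).mp hadj
  obtain ⟨hne, hrel | hrel⟩ := hadj
  · obtain ⟨c', e', i', ⟨hi', hx, hy⟩ | ⟨hi', hx, hy⟩ | ⟨j, hj, hx, hy⟩⟩ := hrel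
    · exact (Sum.inr_ne_inl hx).elim
    · obtain ⟨rfl, rfl, hval⟩ := coreInr_inj hx
      right
      erw [nV, dif_pos (by omega), hy]
    · obtain ⟨rfl, rfl, hval⟩ := coreInr_inj hx
      right
      have hjb := j.2
      erw [nV, dif_neg (by omega), hy]
      exact coreInr_mk_eq (show (j : ℕ) = (i : ℕ) + 1 by omega)
  · obtain ⟨c', e', i', ⟨hi', hx, hy⟩ | ⟨hi', hx, hy⟩ | ⟨j, hj, hx, hy⟩⟩ := hrel
    · obtain ⟨rfl, rfl, hval⟩ := coreInr_inj hy
      left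
      erw [pV, dif_pos (by omega), hx]
    · exact (Sum.inr_ne_inl hy).elim
    · obtain ⟨rfl, rfl, hval⟩ := coreInr_inj hy
      left
      have hib := i'.2
      erw [pV, dif_neg (by omega), hx]
      exact coreInr_mk_eq (show (i' : ℕ) = (i : ℕ) - 1 by omega)

lemma deg_two (hℓ : 2 ≤ ℓ) (φ : SimpleGraph.cycleGraph (3 * ℓ + q) ≃g M.coe)
    {v : CoreV V G ℓ q} (hv : v ∈ M.verts) : {u | M.Adj v u}.ncard = 2 := by
  haveI : NeZero (3 * ℓ + q) := ⟨by omega⟩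
  set w0 := φ.symm ⟨v, hv⟩ with hw0
  have e1 : {u | M.Adj v u} ≃ (M.coe.neighborSet ⟨v, hv⟩) :=
    { toFun := fun u => ⟨⟨u.1, M.edge_vert (M.adj_symm u.2)⟩, u.2⟩
      invFun := fun w => ⟨w.1.1, w.2⟩
      left_inv := fun _ => rfl
      right_inv := fun _ => rfl }
  have hφ : φ w0 = ⟨v, hv⟩ := φ.apply_symm_apply _
  have e2 : ((SimpleGraph.cycleGraph (3 * ℓ + q)).neighborSet w0) ≃
      (M.coe.neighborSet ⟨v, hv⟩) := by
    rw [← hφ]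
    exact φ.mapNeighborSet w0
  have hset : (SimpleGraph.cycleGraph (3 * ℓ + q)).neighborSet w0 = {w0 + 1, w0 - 1} := by
    ext u
    simp only [SimpleGraph.mem_neighborSet, cyc_adj hℓ, Set.mem_insert_iff,
      Set.mem_singleton_iff]
    constructor
    · rintro (rfl | h)
      · exact Or.inl rfl
      · right; rw [h, add_sub_cancel_right]
    · rintro (rfl | rfl)
      · exact Or.inl rfl
      · right; rw [sub_add_cancel]
  have hne2 : w0 + 1 ≠ w0 - 1 := by
    intro h
    have h1 : ((1 : Fin (3 * ℓ + q)) : ℕ) = 1 := by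
      rw [Fin.val_one', Nat.mod_eq_of_lt (by omega)]
    have h2 : (1 : Fin (3 * ℓ + q)) = -1 := by
      have := add_left_cancel (a := w0) (b := 1) (c := -1) (by rw [← sub_eq_add_neg]; exact h)
      exact this
    have h3 : (1 + 1 : Fin (3 * ℓ + q)) = 0 := by
      nth_rewrite 2 [h2]
      exact add_neg_cancel 1
    have h4 : ((1 + 1 : Fin (3 * ℓ + q)) : ℕ) = 2 := by
      rw [Fin.add_def]
      show (((1 : Fin (3 * ℓ + q)) : ℕ) + ((1 : Fin (3 * ℓ + q)) : ℕ)) % (3 * ℓ + q) = 2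
      rw [h1, Nat.mod_eq_of_lt (by omega)]
    rw [h3] at h4
    simp at h4
  rw [← Nat.card_coe_set_eq, Nat.card_congr e1, ← Nat.card_congr e2,
    Nat.card_coe_set_eq, hset, Set.ncard_pair hne2]

lemma nbhd_internal (hdeg : ∀ v ∈ M.verts, {u | M.Adj v u}.ncard = 2) (c : PairClass) (i : Fin (inLen ℓ q c)) :
    {u | M.Adj (sel M hu (.inr ⟨c, i⟩)) u} =
      {pV c (eSel M hu c i) i, nV c (eSel M hu c i) i} := by
  apply Set.eq_of_subset_of_ncard_le
  · intro u hu'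
    rw [Set.mem_setOf_eq, eSel_spec] at hu'
    exact adj_internal_sub M hu'
  · rw [Set.ncard_pair (pV_ne_nV c _ i), hdeg _ (sel_mem M hu _)]
  · exact Set.toFinite _

lemma adj_pV (hdeg : ∀ v ∈ M.verts, {u | M.Adj v u}.ncard = 2) (c : PairClass) (i : Fin (inLen ℓ q c)) :
    M.Adj (sel M hu (.inr ⟨c, i⟩)) (pV c (eSel M hu c i) i) := by
  have : pV c (eSel M hu c i) i ∈
      ({pV c (eSel M hu c i) i, nV c (eSel M hu c i) i} : Set (CoreV V G ℓ q)) :=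
    Or.inl rfl
  rw [← nbhd_internal M hu hdeg] at this
  exact this

lemma adj_nV (hdeg : ∀ v ∈ M.verts, {u | M.Adj v u}.ncard = 2) (c : PairClass) (i : Fin (inLen ℓ q c)) :
    M.Adj (sel M hu (.inr ⟨c, i⟩)) (nV c (eSel M hu c i) i) := by
  have : nV c (eSel M hu c i) i ∈
      ({pV c (eSel M hu c i) i, nV c (eSel M hu c i) i} : Set (CoreV V G ℓ q)) :=
    Or.inr rfl
  rw [← nbhd_internal M hu hdeg] at this
  exact this

lemma eSel_chain (hdeg : ∀ v ∈ M.verts, {u | M.Adj v u}.ncard = 2) (hℓ : 2 ≤ ℓ) (c : PairClass) (i : Fin (inLen ℓ q c)) :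
    eSel M hu c i = eSel M hu c ⟨0, len_pos hℓ c⟩ := by
  suffices H : ∀ n (i : Fin (inLen ℓ q c)), (i : ℕ) = n →
      eSel M hu c i = eSel M hu c ⟨0, len_pos hℓ c⟩ from H _ i rfl
  intro n
  induction n with
  | zero =>
    intro i hi
    have : i = ⟨0, len_pos hℓ c⟩ := Fin.ext hi
    rw [this]
  | succ n ih =>
    intro i hi
    have hne : (i : ℕ) ≠ 0 := by omega
    have hadj := adj_pV M hu hdeg c i
    erw [pV, dif_neg hne] at hadj
    have hmem := M.edge_vert hadj.symm
    have heq := sel_eq M hu (p := .inr ⟨c, ⟨(i : ℕ) - 1, by have := i.2; omega⟩⟩) hmem rfl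
    rw [eSel_spec] at heq
    obtain ⟨-, he, -⟩ := coreInr_inj heq
    rw [he]
    exact ih _ (by show (i : ℕ) - 1 = n; omega)

lemma sel_src (hdeg : ∀ v ∈ M.verts, {u | M.Adj v u}.ncard = 2) (hℓ : 2 ≤ ℓ) (c : PairClass) :
    sel M hu (.inl (srcCopy c)) =
      .inl (srcCopy c, (eSel M hu c ⟨0, len_pos hℓ c⟩).1.1) := by
  have hadj := adj_pV M hu hdeg c ⟨0, len_pos hℓ c⟩
  erw [pV, dif_pos rfl] at hadj
  have hmem := M.edge_vert hadj.symm
  exact (sel_eq M hu (p := .inl (srcCopy c)) hmem rfl).symm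

lemma sel_dst (hdeg : ∀ v ∈ M.verts, {u | M.Adj v u}.ncard = 2) (hℓ : 2 ≤ ℓ) (c : PairClass) :
    sel M hu (.inl (dstCopy c)) =
      .inl (dstCopy c, (eSel M hu c ⟨0, len_pos hℓ c⟩).1.2) := by
  have hlen := len_pos (q := q) hℓ c
  have hadj := adj_nV M hu hdeg c ⟨inLen ℓ q c - 1, by omega⟩
  erw [nV, dif_pos rfl] at hadj
  have hmem := M.edge_vert hadj.symm
  have := (sel_eq M hu (p := .inl (dstCopy c)) hmem rfl).symm
  rw [this, eSel_chain M hu hdeg hℓ]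

include hu in
lemma M_eq_std (hℓ : 2 ≤ ℓ)
    (hdeg : ∀ v ∈ M.verts, {u | M.Adj v u}.ncard = 2) :
    ∃ t : Tri G, M = std t := by
  have hsrcAB := sel_src M hu hdeg hℓ .AB
  have hsrcBC := sel_src M hu hdeg hℓ .BC
  have hsrcAC := sel_src M hu hdeg hℓ .AC
  have hdstAB := sel_dst M hu hdeg hℓ .AB
  have hdstBC := sel_dst M hu hdeg hℓ .BC
  have hdstAC := sel_dst M hu hdeg hℓ .AC
  have hb : (eSel M hu .BC ⟨0, len_pos hℓ .BC⟩).1.1 =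
      (eSel M hu .AB ⟨0, len_pos hℓ .AB⟩).1.2 := by
    have h1 : sel M hu (.inl 1) =
        .inl (1, (eSel M hu .AB ⟨0, len_pos hℓ .AB⟩).1.2) := hdstAB
    have h2 : sel M hu (.inl 1) =
        .inl (1, (eSel M hu .BC ⟨0, len_pos hℓ .BC⟩).1.1) := hsrcBC
    exact (congrArg Prod.snd (Sum.inl.inj (h1.symm.trans h2))).symm
  have ha : (eSel M hu .AC ⟨0, len_pos hℓ .AC⟩).1.1 =
      (eSel M hu .AB ⟨0, len_pos hℓ .AB⟩).1.1 := by
    have h1 : sel M hu (.inl 0) =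
        .inl (0, (eSel M hu .AB ⟨0, len_pos hℓ .AB⟩).1.1) := hsrcAB
    have h2 : sel M hu (.inl 0) =
        .inl (0, (eSel M hu .AC ⟨0, len_pos hℓ .AC⟩).1.1) := hsrcAC
    exact (congrArg Prod.snd (Sum.inl.inj (h1.symm.trans h2))).symm
  have hc : (eSel M hu .AC ⟨0, len_pos hℓ .AC⟩).1.2 =
      (eSel M hu .BC ⟨0, len_pos hℓ .BC⟩).1.2 := by
    have h1 : sel M hu (.inl 2) =
        .inl (2, (eSel M hu .BC ⟨0, len_pos hℓ .BC⟩).1.2) := hdstBC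
    have h2 : sel M hu (.inl 2) =
        .inl (2, (eSel M hu .AC ⟨0, len_pos hℓ .AC⟩).1.2) := hdstAC
    exact (congrArg Prod.snd (Sum.inl.inj (h1.symm.trans h2))).symm
  have hab : G.Adj (eSel M hu .AB ⟨0, len_pos hℓ .AB⟩).1.1
      (eSel M hu .AB ⟨0, len_pos hℓ .AB⟩).1.2 := (eSel M hu .AB ⟨0, len_pos hℓ .AB⟩).2
  have hbc : G.Adj (eSel M hu .AB ⟨0, len_pos hℓ .AB⟩).1.2
      (eSel M hu .BC ⟨0, len_pos hℓ .BC⟩).1.2 := by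
    rw [← hb]; exact (eSel M hu .BC ⟨0, len_pos hℓ .BC⟩).2
  have hac : G.Adj (eSel M hu .AB ⟨0, len_pos hℓ .AB⟩).1.1
      (eSel M hu .BC ⟨0, len_pos hℓ .BC⟩).1.2 := by
    rw [← ha, ← hc]; exact (eSel M hu .AC ⟨0, len_pos hℓ .AC⟩).2
  refine ⟨⟨((eSel M hu .AB ⟨0, len_pos hℓ .AB⟩).1.1,
    (eSel M hu .AB ⟨0, len_pos hℓ .AB⟩).1.2,
    (eSel M hu .BC ⟨0, len_pos hℓ .BC⟩).1.2), hab, hbc, hac⟩, ?_⟩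
  set t : Tri G := ⟨((eSel M hu .AB ⟨0, len_pos hℓ .AB⟩).1.1,
    (eSel M hu .AB ⟨0, len_pos hℓ .AB⟩).1.2,
    (eSel M hu .BC ⟨0, len_pos hℓ .BC⟩).1.2), hab, hbc, hac⟩ with ht
  have hedge : ∀ c, edgeOf t c = eSel M hu c ⟨0, len_pos hℓ c⟩ := by
    intro c
    cases c
    · exact Subtype.ext
        (show ((eSel M hu .AB ⟨0, len_pos hℓ .AB⟩).1.1,
          (eSel M hu .AB ⟨0, len_pos hℓ .AB⟩).1.2) = _ from Prod.mk.eta)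
    · refine Subtype.ext (show ((eSel M hu .AB ⟨0, len_pos hℓ .AB⟩).1.2,
        (eSel M hu .BC ⟨0, len_pos hℓ .BC⟩).1.2) = _ from ?_)
      rw [← hb]
    · refine Subtype.ext (show ((eSel M hu .AB ⟨0, len_pos hℓ .AB⟩).1.1,
        (eSel M hu .BC ⟨0, len_pos hℓ .BC⟩).1.2) = _ from ?_)
      rw [← ha, ← hc]
  have hsel : ∀ p, sel M hu p = stdSel t p := by
    intro p
    rcases p with ⟨j, hj3⟩ | ⟨c, i⟩
    · match j, hj3 with
      | 0, _ => exact hsrcAB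
      | 1, _ => exact hdstAB
      | 2, _ => exact hdstBC
    · rw [eSel_spec, eSel_chain M hu hdeg hℓ,
        show stdSel t (Sum.inr ⟨c, i⟩) = Sum.inr ⟨c, edgeOf t c, i⟩ from rfl, hedge c]
  have hAdjDir : ∀ p p', nextRel ℓ q p p' → M.Adj (stdSel t p) (stdSel t p') := by
    rintro p p' ⟨c, ⟨i, hi, rfl, rfl⟩ | ⟨i, hi, rfl, rfl⟩ | ⟨i, j, hj, rfl, rfl⟩⟩
    · have hi' : i = ⟨0, len_pos hℓ c⟩ := Fin.ext hi
      have hadj := adj_pV M hu hdeg c i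
      erw [pV, dif_pos hi] at hadj
      rw [hi'] at hadj ⊢
      rw [← hsel, ← hsel, sel_src M hu hdeg hℓ c]
      exact hadj.symm
    · have hadj := adj_nV M hu hdeg c i
      erw [nV, dif_pos hi] at hadj
      rw [eSel_chain M hu hdeg hℓ] at hadj
      rw [← hsel, ← hsel, sel_dst M hu hdeg hℓ c]
      exact hadj
    · have hjb := j.2
      have hjlt : (i : ℕ) + 1 < inLen ℓ q c := by omega
      have hj' : j = ⟨(i : ℕ) + 1, hjlt⟩ := Fin.ext hj
      have hadj := adj_nV M hu hdeg c i
      erw [nV, dif_neg (by omega)] at hadj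
      rw [hj', ← hsel, ← hsel, eSel_spec M hu c ⟨(i : ℕ) + 1, hjlt⟩,
        eSel_chain M hu hdeg hℓ c ⟨(i : ℕ) + 1, hjlt⟩,
        ← eSel_chain M hu hdeg hℓ c i]
      exact hadj
  have hverts : M.verts = (std t).verts := by
    ext v
    constructor
    · intro hv
      exact ⟨corePart G ℓ q v, by rw [← hsel]; exact (sel_eq M hu hv rfl).symm⟩
    · rintro ⟨p, rfl⟩
      rw [← hsel]; exact sel_mem M hu p
  have hAdjEq : ∀ u v', M.Adj u v' ↔ (std t).Adj u v' := by
    intro u v'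
    constructor
    · intro h
      have hu1 := M.edge_vert h
      have hv1 := M.edge_vert h.symm
      have hu2 : u = stdSel t (corePart G ℓ q u) := by
        rw [← hsel]; exact sel_eq M hu hu1 rfl
      have hv2 : v' = stdSel t (corePart G ℓ q v') := by
        rw [← hsel]; exact sel_eq M hu hv1 rfl
      have hcore := M.adj_sub h
      rw [coreGraph, SimpleGraph.fromRel_adj] at hcore
      obtain ⟨hne, hrel | hrel⟩ := hcore
      · rw [hu2, hv2] at hrel
        rw [coreRel_stdSel] at hrel
        exact ⟨_, _, Or.inl hrel, hu2, hv2⟩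
      · rw [hu2, hv2] at hrel
        rw [coreRel_stdSel] at hrel
        exact ⟨_, _, Or.inr hrel, hu2, hv2⟩
    · rintro ⟨p, p', hC, rfl, rfl⟩
      rcases hC with hC | hC
      · exact hAdjDir p p' hC
      · exact (hAdjDir p' p hC).symm
  exact SimpleGraph.Subgraph.ext hverts
    (funext fun u => funext fun v' => propext (hAdjEq u v'))

end Reverse


lemma std_inj : Function.Injective (std : Tri G → (coreGraph G ℓ q).Subgraph) := by
  intro t1 t2 h
  have hv : ∀ j : Fin 3, vOf t1 j = vOf t2 j := by
    intro j
    have h1 : stdSel t1 (.inl j) ∈ (std (ℓ := ℓ) (q := q) t2).verts := by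
      rw [← h]; exact ⟨.inl j, rfl⟩
    obtain ⟨p, hp⟩ := h1
    have hpart : p = .inl j := by rw [← part_stdSel t2 p, hp, part_stdSel]
    rw [hpart] at hp
    exact (congrArg Prod.snd (Sum.inl.inj hp)).symm
  apply Subtype.ext
  exact Prod.ext (hv 0) (Prod.ext (hv 1) (hv 2))

noncomputable def mainEquiv (hℓ : 2 ≤ ℓ) :
    Tri G ≃ {M : (coreGraph G ℓ q).Subgraph //
      Nonempty (SimpleGraph.cycleGraph (3 * ℓ + q) ≃g M.coe) ∧
      ∀ p : Fin 3 ⊕ Σ c : PairClass, Fin (inLen ℓ q c),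
        ∃! v : CoreV V G ℓ q, v ∈ M.verts ∧ corePart G ℓ q v = p} := by
  haveI : NeZero (3 * ℓ + q) := ⟨by omega⟩
  refine Equiv.ofBijective
    (fun t => ⟨std t, ⟨stdIso hℓ t⟩, std_unique t⟩) ⟨?_, ?_⟩
  · intro t1 t2 h
    exact std_inj (congrArg Subtype.val h)
  · rintro ⟨M, ⟨φ⟩, huq⟩
    obtain ⟨t, rfl⟩ := M_eq_std M huq hℓ (fun v hv => deg_two M hℓ φ hv)
    exact ⟨t, rfl⟩


lemma tri_card {V : Type} [Fintype V] (G : SimpleGraph V) :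
    Nat.card (Tri G) = 6 * Nat.card {s : Finset V // G.IsNClique 3 s} := by
  classical
  letI : LinearOrder V :=
    LinearOrder.lift' (Fintype.equivFin V) (Fintype.equivFin V).injective
  let w : {s : Finset V // G.IsNClique 3 s} → Fin 3 → V := fun s i =>
    (s.1.orderIsoOfFin s.2.card_eq i : V)
  have hmem : ∀ (s : {s : Finset V // G.IsNClique 3 s}) i, w s i ∈ s.1 := fun s i =>
    (s.1.orderIsoOfFin s.2.card_eq i).2
  have hwinj : ∀ s, Function.Injective (w s) := fun s i j hij =>
    (s.1.orderIsoOfFin s.2.card_eq).injective (Subtype.ext hij)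
  have hadj : ∀ s i j, i ≠ j → G.Adj (w s i) (w s j) := fun s i j hij =>
    s.2.isClique (hmem s i) (hmem s j) (fun hh => hij (hwinj s hh))
  let F : {s : Finset V // G.IsNClique 3 s} × Equiv.Perm (Fin 3) → Tri G := fun x =>
    ⟨(w x.1 (x.2 0), w x.1 (x.2 1), w x.1 (x.2 2)),
      hadj _ _ _ (fun hh => (by decide : ¬ (0 : Fin 3) = 1) (x.2.injective hh)),
      hadj _ _ _ (fun hh => (by decide : ¬ (1 : Fin 3) = 2) (x.2.injective hh)),
      hadj _ _ _ (fun hh => (by decide : ¬ (0 : Fin 3) = 2) (x.2.injective hh))⟩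
  have himg : ∀ s, Finset.image (w s) Finset.univ = s.1 := by
    intro s
    apply Finset.eq_of_subset_of_card_le
    · intro x hx
      obtain ⟨i, _, rfl⟩ := Finset.mem_image.mp hx
      exact hmem s i
    · rw [Finset.card_image_of_injective _ (hwinj s), s.2.card_eq, Finset.card_univ,
        Fintype.card_fin]
  have himg3 : ∀ s (σ : Equiv.Perm (Fin 3)),
      ({w s (σ 0), w s (σ 1), w s (σ 2)} : Finset V) = s.1 := by
    intro s σ
    rw [← himg s]
    have h1 : (Finset.univ : Finset (Fin 3)) = Finset.image σ Finset.univ :=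
      (Finset.image_univ_equiv σ).symm
    have h2 : (Finset.univ : Finset (Fin 3)) = {0, 1, 2} := by decide
    rw [h1, h2, Finset.image_image]
    rw [Finset.image_insert, Finset.image_insert, Finset.image_singleton]
    rfl
  have hFbij : Function.Bijective F := by
    constructor
    · rintro ⟨s, σ⟩ ⟨s', σ'⟩ h
      have hcomp := congrArg (fun t : Tri G => t.1) h
      have h0 : w s (σ 0) = w s' (σ' 0) := congrArg (fun p : V × V × V => p.1) hcomp
      have h1 : w s (σ 1) = w s' (σ' 1) := congrArg (fun p : V × V × V => p.2.1) hcomp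
      have h2 : w s (σ 2) = w s' (σ' 2) := congrArg (fun p : V × V × V => p.2.2) hcomp
      have hs : s = s' := by
        apply Subtype.ext
        rw [← himg3 s σ, ← himg3 s' σ', h0, h1, h2]
      subst hs
      have hσ : σ = σ' := by
        apply Equiv.ext
        intro i
        fin_cases i
        · exact hwinj s h0
        · exact hwinj s h1
        · exact hwinj s h2
      rw [hσ]
    · rintro ⟨⟨a, b, c⟩, hab, hbc, hac⟩
      have hclique : G.IsNClique 3 {a, b, c} :=
        SimpleGraph.is3Clique_triple_iff.mpr ⟨hab, hac, hbc⟩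
      set s : {s : Finset V // G.IsNClique 3 s} := ⟨{a, b, c}, hclique⟩ with hs
      let vv : Fin 3 → V := vOf (⟨(a, b, c), hab, hbc, hac⟩ : Tri G)
      have hvmem : ∀ i : Fin 3, vv i ∈ s.1 := by
        intro i
        fin_cases i
        · exact Finset.mem_insert_self a {b, c}
        · exact Finset.mem_insert_of_mem (Finset.mem_insert_self b {c})
        · exact Finset.mem_insert_of_mem
            (Finset.mem_insert_of_mem (Finset.mem_singleton_self c))
      have hvvinj : Function.Injective vv := by
        intro i j hij
        fin_cases i <;> fin_cases j <;>
          first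
          | rfl
          | exact absurd hij hab.ne
          | exact absurd hij hbc.ne
          | exact absurd hij hac.ne
          | exact absurd hij.symm hab.ne
          | exact absurd hij.symm hbc.ne
          | exact absurd hij.symm hac.ne
      let g : Fin 3 → Fin 3 := fun i =>
        (s.1.orderIsoOfFin s.2.card_eq).symm ⟨vv i, hvmem i⟩
      have hginj : Function.Injective g := by
        intro i j hij
        have := congrArg (fun x => ((s.1.orderIsoOfFin s.2.card_eq) x : V)) hij
        simp only [g, OrderIso.apply_symm_apply] at this
        exact hvvinj this
      refine ⟨(s, Equiv.ofBijective g (Finite.injective_iff_bijective.mp hginj)), ?_⟩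
      have hws : ∀ i, w s (Equiv.ofBijective g
          (Finite.injective_iff_bijective.mp hginj) i) = vv i := by
        intro i
        show ((s.1.orderIsoOfFin s.2.card_eq)
          ((s.1.orderIsoOfFin s.2.card_eq).symm ⟨vv i, hvmem i⟩) : V) = vv i
        rw [OrderIso.apply_symm_apply]
      exact Subtype.ext (Prod.ext (hws 0) (Prod.ext (hws 1) (hws 2)))
  have hcongr := Nat.card_congr (Equiv.ofBijective F hFbij)
  rw [← hcongr, Nat.card_prod]
  have hperm : Nat.card (Equiv.Perm (Fin 3)) = 6 := by
    rw [Nat.card_eq_fintype_card, Fintype.card_perm, Fintype.card_fin]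
    rfl
  rw [hperm, Nat.mul_comm]

end CoreProof

/-- For `ℓ ≥ 2`, `q ≤ 2` and `r = 3ℓ + q`, the number of subgraphs
of `G_core` that are cycles of length `r` containing exactly one vertex from each
part of the partition `P'` equals six times the number of triangles of `G`. -/
theorem core_cycles_eq_six_mul_triangles {V : Type} [Fintype V] (G : SimpleGraph V)
    (ℓ q : ℕ) (hℓ : 2 ≤ ℓ) (hq : q ≤ 2) :
    Nat.card {M : (coreGraph G ℓ q).Subgraph //
        Nonempty (SimpleGraph.cycleGraph (3 * ℓ + q) ≃g M.coe) ∧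
        ∀ p : Fin 3 ⊕ Σ c : PairClass, Fin (inLen ℓ q c),
          ∃! v : CoreV V G ℓ q, v ∈ M.verts ∧ corePart G ℓ q v = p} =
      6 * Nat.card {s : Finset V // G.IsNClique 3 s} := by
  rw [← CoreProof.tri_card G]
  exact (Nat.card_congr (CoreProof.mainEquiv (G := G) (ℓ := ℓ) (q := q) hℓ)).symm
end
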